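/- In the discrete setting, let p ∈ ℝ₊ⁿ, q ∈ ℝ₊ᵐ, p̂ = [p; |q|] ∈ ℝ^{n+1}, q̂ = [q; |p|] ∈ ℝ^{m+1}. For γ ∈ Γ≤(p,q), define γ̂ ∈ ℝ₊^{(n+1)×(m+1)} by γ̂[1:n,1:m] = γ, γ̂_{i,m+1} = pᵢ − (γ1ₘ)ᵢ for i ≤ n, γ̂_{n+1,j} = qⱼ − (γᵀ1ₙ)ⱼ for j ≤ m, and γ̂_{n+1,m+1} = |γ|. Then γ̂ ∈ Γ(p̂,q̂), i.e., γ̂1_{m+1} = p̂ and γ̂ᵀ1_{n+1} = q̂, and moreover for the extended tensor M̂ (equal to M̃ = M − 2λ on the original indices and 0 elsewhere) the objectives agree: ⟨M̂∘γ̂, γ̂⟩_F = ⟨M̃∘γ, γ⟩_F. -/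
import Mathlib

theorem stmt_18 {n m : ℕ} (p : Fin n → ℝ) (q : Fin m → ℝ)
    (M : Fin n → Fin m → Fin n → Fin m → ℝ) (lam : ℝ)
    (γ : Fin n → Fin m → ℝ) (hpos : ∀ i j, 0 ≤ γ i j)
    (h1 : ∀ i, ∑ j, γ i j ≤ p i) (h2 : ∀ j, ∑ i, γ i j ≤ q j) :
    let phat : Fin (n + 1) → ℝ := fun i =>
      if h : (i : ℕ) < n then p ⟨i, h⟩ else ∑ j, q j
    let qhat : Fin (m + 1) → ℝ := fun j =>
      if h : (j : ℕ) < m then q ⟨j, h⟩ else ∑ i, p i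
    let γhat : Fin (n + 1) → Fin (m + 1) → ℝ := fun i j =>
      if hi : (i : ℕ) < n then
        (if hj : (j : ℕ) < m then γ ⟨i, hi⟩ ⟨j, hj⟩
         else p ⟨i, hi⟩ - ∑ j', γ ⟨i, hi⟩ j')
      else
        (if hj : (j : ℕ) < m then q ⟨j, hj⟩ - ∑ i', γ i' ⟨j, hj⟩
         else ∑ i', ∑ j', γ i' j')
    let Mhat : Fin (n + 1) → Fin (m + 1) → Fin (n + 1) → Fin (m + 1) → ℝ :=
      fun i j i' j' =>
        if hi : (i : ℕ) < n then
          if hj : (j : ℕ) < m then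
            if hi' : (i' : ℕ) < n then
              if hj' : (j' : ℕ) < m then
                M ⟨i, hi⟩ ⟨j, hj⟩ ⟨i', hi'⟩ ⟨j', hj'⟩ - 2 * lam
              else 0
            else 0
          else 0
        else 0
    (∀ i j, 0 ≤ γhat i j) ∧
    (∀ i, ∑ j, γhat i j = phat i) ∧ (∀ j, ∑ i, γhat i j = qhat j) ∧
    (∑ i, ∑ j, ∑ i', ∑ j', Mhat i j i' j' * γhat i j * γhat i' j'
      = ∑ i, ∑ j, ∑ i', ∑ j', (M i j i' j' - 2 * lam) * γ i j * γ i' j') := by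
  intro phat qhat γhat Mhat
  have hcc : ∀ (i : Fin n) (j : Fin m), γhat i.castSucc j.castSucc = γ i j := by
    intro i j; simp [γhat]
  have hcl : ∀ (i : Fin n), γhat i.castSucc (Fin.last m) = p i - ∑ j', γ i j' := by
    intro i; simp [γhat]
  have hlc : ∀ (j : Fin m), γhat (Fin.last n) j.castSucc = q j - ∑ i', γ i' j := by
    intro j; simp [γhat]
  have hll : γhat (Fin.last n) (Fin.last m) = ∑ i', ∑ j', γ i' j' := by
    simp [γhat]
  refine ⟨?_, ?_, ?_, ?_⟩
  · intro i j
    induction i using Fin.lastCases with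
    | last =>
      induction j using Fin.lastCases with
      | last => rw [hll]; exact Finset.sum_nonneg fun i _ => Finset.sum_nonneg fun j _ => hpos i j
      | cast j => rw [hlc]; exact sub_nonneg.2 (h2 j)
    | cast i =>
      induction j using Fin.lastCases with
      | last => rw [hcl]; exact sub_nonneg.2 (h1 i)
      | cast j => rw [hcc]; exact hpos i j
  · intro i
    induction i using Fin.lastCases with
    | last =>
      rw [Fin.sum_univ_castSucc]
      simp only [hlc, hll, phat]
      rw [dif_neg (by simp)]
      rw [Finset.sum_sub_distrib, Finset.sum_comm]
      ring
    | cast i =>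
      rw [Fin.sum_univ_castSucc]
      simp only [hcc, hcl, phat]
      simp
  · intro j
    induction j using Fin.lastCases with
    | last =>
      rw [Fin.sum_univ_castSucc]
      simp only [hcl, hll, qhat]
      rw [dif_neg (by simp)]
      rw [Finset.sum_sub_distrib]
      ring
    | cast j =>
      rw [Fin.sum_univ_castSucc]
      simp only [hcc, hlc, qhat]
      simp
  · have hM0 : ∀ (i : Fin (n+1)) (j : Fin (m+1)) (i' : Fin (n+1)) (j' : Fin (m+1)),
        ((i:ℕ) = n ∨ (j:ℕ) = m ∨ (i':ℕ) = n ∨ (j':ℕ) = m) → Mhat i j i' j' = 0 := by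
      intro i j i' j' h
      simp only [Mhat]
      rcases h with h | h | h | h <;>
        [skip; rw [dite_eq_iff']; rw [dite_eq_iff']; rw [dite_eq_iff']] <;>
        simp [h]
    rw [Fin.sum_univ_castSucc]
    have hlast0 : ∀ (j : Fin (m+1)) (i' : Fin (n+1)) (j' : Fin (m+1)),
        Mhat (Fin.last n) j i' j' * γhat (Fin.last n) j * γhat i' j' = 0 := by
      intro j i' j'; rw [hM0 _ _ _ _ (Or.inl (by simp))]; ring
    simp only [hlast0, Finset.sum_const_zero, add_zero]
    refine Finset.sum_congr rfl fun i _ => ?_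
    rw [Fin.sum_univ_castSucc]
    have : ∀ (i' : Fin (n+1)) (j' : Fin (m+1)),
        Mhat i.castSucc (Fin.last m) i' j' * γhat i.castSucc (Fin.last m) * γhat i' j' = 0 := by
      intro i' j'; rw [hM0 _ _ _ _ (Or.inr (Or.inl (by simp)))]; ring
    simp only [this, Finset.sum_const_zero, add_zero]
    refine Finset.sum_congr rfl fun j _ => ?_
    rw [Fin.sum_univ_castSucc]
    have : ∀ (j' : Fin (m+1)),
        Mhat i.castSucc j.castSucc (Fin.last n) j' * γhat i.castSucc j.castSucc * γhat (Fin.last n) j' = 0 := by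
      intro j'; rw [hM0 _ _ _ _ (Or.inr (Or.inr (Or.inl (by simp))))]; ring
    simp only [this, Finset.sum_const_zero, add_zero]
    refine Finset.sum_congr rfl fun i' _ => ?_
    rw [Fin.sum_univ_castSucc]
    have : Mhat i.castSucc j.castSucc i'.castSucc (Fin.last m) * γhat i.castSucc j.castSucc * γhat i'.castSucc (Fin.last m) = 0 := by
      rw [hM0 _ _ _ _ (Or.inr (Or.inr (Or.inr (by simp))))]; ring
    rw [this, add_zero]
    refine Finset.sum_congr rfl fun j' _ => ?_
    rw [hcc, hcc]
    congr 1
    congr 1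
    simp [Mhat]
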